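/- Let 1 ≤ s ≤ r be integers. If A ⊆ F₂^r is an (r,s)-set, then A ∪ {0} is an (r,s)-good set. Moreover, G₁(r,s) = G(r,s) − 1. -/

import Mathlib

/-- `A ⊆ F₂^r` is a *generic `(r,s)`-erasure correcting set* if for every `r × s` matrix `M`
over `F₂` of rank `s` there is `a ∈ A` such that the row vector `a·M` has Hamming weight `1`. -/
def IsGenericSet (r s : ℕ) (A : Set (Fin r → ZMod 2)) : Prop :=
  ∀ M : Matrix (Fin r) (Fin s) (ZMod 2), M.rank = s →
    ∃ a ∈ A, hammingNorm (Matrix.vecMul a M) = 1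

/-- `F(r,s)`: the minimum cardinality of a generic `(r,s)`-set. -/
noncomputable def Fgen (r s : ℕ) : ℕ :=
  sInf {n | ∃ A : Finset (Fin r → ZMod 2), IsGenericSet r s ↑A ∧ A.card = n}

/-- The standard bilinear form `⟨x,y⟩ = ∑ i, x i * y i` on `F₂^r`. -/
def bform {r : ℕ} (x y : Fin r → ZMod 2) : ZMod 2 := ∑ i, x i * y i

/-- `A ⊆ F₂^r` is an *(r,s)-set* if for every `s` linearly independent vectors `v₁, …, v_s`
there is `c ∈ A` with `⟨c, v_j⟩ = 1` for all `j`. -/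
def IsRSSet (r s : ℕ) (A : Set (Fin r → ZMod 2)) : Prop :=
  ∀ v : Fin s → (Fin r → ZMod 2), LinearIndependent (ZMod 2) v →
    ∃ c ∈ A, ∀ j, bform c (v j) = 1

/-- `G₁(r,s)`: the minimum cardinality of an `(r,s)`-set. -/
noncomputable def G1 (r s : ℕ) : ℕ :=
  sInf {n | ∃ A : Finset (Fin r → ZMod 2), IsRSSet r s ↑A ∧ A.card = n}

/-- `A ⊆ F₂^r` is an *(r,s)-good set* if for every `s` linearly independent vectors
`v₁, …, v_s` and every `x ∈ F₂^s` there is `c ∈ A` with `⟨c, v_j⟩ = x j` for all `j`. -/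
def IsGoodSet (r s : ℕ) (A : Set (Fin r → ZMod 2)) : Prop :=
  ∀ v : Fin s → (Fin r → ZMod 2), LinearIndependent (ZMod 2) v →
    ∀ x : Fin s → ZMod 2, ∃ c ∈ A, ∀ j, bform c (v j) = x j

/-- `G(r,s)`: the minimum cardinality of an `(r,s)`-good set. -/
noncomputable def Ggood (r s : ℕ) : ℕ :=
  sInf {n | ∃ A : Finset (Fin r → ZMod 2), IsGoodSet r s ↑A ∧ A.card = n}

/-- A linear code `C ⊆ F₂^ι` is *s-wise intersecting* if every `s` linearly independent
codewords have a common coordinate where they are all nonzero. -/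
def IsIntersectingCode {ι : Type*} (s : ℕ) (C : Submodule (ZMod 2) (ι → ZMod 2)) : Prop :=
  ∀ u : Fin s → (ι → ZMod 2), (∀ j, u j ∈ C) → LinearIndependent (ZMod 2) u →
    ∃ i, ∀ j, u j i ≠ 0

/-- `n(k,s)`: the minimum length `n` for which an `s`-wise intersecting `[n,k]` code exists. -/
noncomputable def minIntLen (k s : ℕ) : ℕ :=
  sInf {n | ∃ C : Submodule (ZMod 2) (Fin n → ZMod 2),
    Module.finrank (ZMod 2) C = k ∧ IsIntersectingCode s C}

/-- The Gaussian binomial coefficient `[k choose s]₂` as a real number. -/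
noncomputable def gaussBinom (k s : ℕ) : ℝ :=
  ∏ i ∈ Finset.range s, ((2:ℝ)^(k-i) - 1) / ((2:ℝ)^(s-i) - 1)

-- auxiliary lemmas

lemma bform_add_left {r : ℕ} (a b y : Fin r → ZMod 2) :
    bform (a + b) y = bform a y + bform b y := by
  simp [bform, add_mul, Finset.sum_add_distrib]

lemma bform_add_right {r : ℕ} (c a b : Fin r → ZMod 2) :
    bform c (a + b) = bform c a + bform c b := by
  simp [bform, mul_add, Finset.sum_add_distrib]

lemma bform_smul_right {r : ℕ} (c : Fin r → ZMod 2) (t : ZMod 2) (y : Fin r → ZMod 2) :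
    bform c (t • y) = t * bform c y := by
  simp [bform, Finset.mul_sum]; ring_nf; simp [mul_comm, mul_left_comm]

lemma bform_zero_left {r : ℕ} (y : Fin r → ZMod 2) : bform 0 y = 0 := by
  simp [bform]

lemma bform_exists {r s : ℕ} (v : Fin s → (Fin r → ZMod 2))
    (hv : LinearIndependent (ZMod 2) v) (x : Fin s → ZMod 2) :
    ∃ c : Fin r → ZMod 2, ∀ j, bform c (v j) = x j := by
  set b := Module.Basis.span hv with hb
  obtain ⟨g, hg⟩ := LinearMap.exists_extend (b.constr (ZMod 2) x)
  refine ⟨fun i => g (Pi.single i 1), fun j => ?_⟩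
  have key : ∀ y : Fin r → ZMod 2, bform (fun i => g (Pi.single i 1)) y = g y := by
    intro y
    have hy : y = ∑ i, (y i) • Pi.single i (1 : ZMod 2) := by
      funext k
      simp [Finset.sum_apply, Pi.single_apply]
    calc bform (fun i => g (Pi.single i 1)) y = ∑ i, y i • g (Pi.single i 1) := by
          simp [bform, mul_comm, smul_eq_mul]
      _ = g y := by
            conv_rhs => rw [hy]
            rw [map_sum]
            simp
  rw [key]
  have hmem : v j ∈ Submodule.span (ZMod 2) (Set.range v) :=
    Submodule.subset_span ⟨j, rfl⟩
  have : v j = (Submodule.span (ZMod 2) (Set.range v)).subtype ⟨v j, hmem⟩ := rfl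
  rw [this, ← LinearMap.comp_apply, hg]
  have hbj : (⟨v j, hmem⟩ : Submodule.span (ZMod 2) (Set.range v)) = b j :=
    (Module.Basis.span_apply hv j).symm
  rw [hbj, Module.Basis.constr_basis]

lemma part1 (r s : ℕ) : ∀ A : Set (Fin r → ZMod 2), IsRSSet r s A →
    IsGoodSet r s (A ∪ {0}) := by
  intro A hA v hv x
  by_cases hx : x = 0
  · refine ⟨0, Or.inr rfl, fun j => ?_⟩
    rw [bform_zero_left, hx]; rfl
  · obtain ⟨j0, hj0⟩ : ∃ j0, x j0 ≠ 0 := by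
      by_contra h; push_neg at h; exact hx (funext h)
    have hone : ∀ a : ZMod 2, a ≠ 0 → a = 1 := by decide
    have hx0 : x j0 = 1 := hone _ hj0
    set w : Fin s → (Fin r → ZMod 2) := fun j => v j + (1 + x j) • v j0 with hw
    have hwind : LinearIndependent (ZMod 2) w := by
      rw [Fintype.linearIndependent_iff]
      intro g hg
      set T : ZMod 2 := ∑ j, g j * (1 + x j) with hT
      set P : Fin s → ZMod 2 := Pi.single j0 T with hP
      have hsum : ∑ k, (g k + P k) • v k = 0 := by
        have e1 : ∑ k, (g k + P k) • v k
            = ∑ k, g k • v k + ∑ k, P k • v k := by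
          rw [← Finset.sum_add_distrib]; congr 1; funext k; rw [add_smul]
        have e2 : ∑ k, P k • v k = T • v j0 := by
          rw [Finset.sum_eq_single j0]
          · rw [hP, Pi.single_eq_same]
          · intro k _ hk; rw [hP, Pi.single_eq_of_ne hk, zero_smul]
          · intro h; exact absurd (Finset.mem_univ j0) h
        have e3 : ∑ j, g j • w j = ∑ k, g k • v k + T • v j0 := by
          rw [hw]
          simp only [smul_add, Finset.sum_add_distrib, smul_smul]
          congr 1
          rw [hT, Finset.sum_smul]
        rw [e1, e2, ← e3, hg]
      have hzero := Fintype.linearIndependent_iff.mp hv _ hsum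
      have hgne : ∀ k, k ≠ j0 → g k = 0 := by
        intro k hk
        have := hzero k
        rwa [hP, Pi.single_eq_of_ne hk, add_zero] at this
      have hT0 : T = 0 := by
        rw [hT, Finset.sum_eq_single j0]
        · rw [hx0]
          have h11 : (1 + 1 : ZMod 2) = 0 := by decide
          rw [h11, mul_zero]
        · intro k _ hk; rw [hgne k hk, zero_mul]
        · intro h; exact absurd (Finset.mem_univ j0) h
      have hgj0 : g j0 = 0 := by
        have := hzero j0
        rwa [hP, Pi.single_eq_same, hT0, add_zero] at this
      intro i
      by_cases hi : i = j0
      · rw [hi]; exact hgj0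
      · exact hgne i hi
    obtain ⟨c, hcA, hc⟩ := hA w hwind
    refine ⟨c, Or.inl hcA, fun j => ?_⟩
    have hcj0 : bform c (v j0) = 1 := by
      have := hc j0
      rw [hw] at this
      simp only at this
      rw [bform_add_right, bform_smul_right, hx0] at this
      have h2 : ∀ a : ZMod 2, a + (1 + 1) * a = a := by decide
      rwa [h2] at this
    have := hc j
    rw [hw] at this
    simp only at this
    rw [bform_add_right, bform_smul_right, hcj0, mul_one] at this
    have h2 : ∀ a b : ZMod 2, a + (1 + b) = 1 → a = b := by decide
    exact h2 _ _ this

/-- If `A` is an `(r,s)`-set then `A ∪ {0}` is an `(r,s)`-good set;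
moreover `G₁(r,s) = G(r,s) − 1`. -/
theorem statement0 (r s : ℕ) (hs : 1 ≤ s) (hsr : s ≤ r) :
    (∀ A : Set (Fin r → ZMod 2), IsRSSet r s A → IsGoodSet r s (A ∪ {0})) ∧
    G1 r s = Ggood r s - 1 := by
  refine ⟨part1 r s, ?_⟩
  -- universal sets
  have huniv_good : IsGoodSet r s ↑(Finset.univ : Finset (Fin r → ZMod 2)) := by
    intro v hv x
    obtain ⟨c, hc⟩ := bform_exists v hv x
    exact ⟨c, by simp, hc⟩
  have huniv_rs : IsRSSet r s ↑(Finset.univ : Finset (Fin r → ZMod 2)) := by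
    intro v hv
    obtain ⟨c, hc⟩ := bform_exists v hv 1
    exact ⟨c, by simp, hc⟩
  have hS1ne : {n | ∃ A : Finset (Fin r → ZMod 2), IsRSSet r s ↑A ∧ A.card = n}.Nonempty :=
    ⟨_, Finset.univ, huniv_rs, rfl⟩
  have hSgne : {n | ∃ A : Finset (Fin r → ZMod 2), IsGoodSet r s ↑A ∧ A.card = n}.Nonempty :=
    ⟨_, Finset.univ, huniv_good, rfl⟩
  -- Ggood ≤ G1 + 1
  obtain ⟨A, hA, hAcard⟩ : ∃ A : Finset (Fin r → ZMod 2), IsRSSet r s ↑A ∧ A.card = G1 r s :=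
    Nat.sInf_mem hS1ne
  have hgood : IsGoodSet r s ↑(insert (0 : Fin r → ZMod 2) A) := by
    have := part1 r s ↑A hA
    rwa [Set.union_comm, ← Set.insert_eq, ← Finset.coe_insert] at this
  have hGle : Ggood r s ≤ G1 r s + 1 := by
    have h1 : Ggood r s ≤ (insert (0 : Fin r → ZMod 2) A).card :=
      Nat.sInf_le ⟨_, hgood, rfl⟩
    have h2 : (insert (0 : Fin r → ZMod 2) A).card ≤ A.card + 1 :=
      Finset.card_insert_le _ _
    omega
  -- G1 ≤ Ggood - 1
  obtain ⟨B, hB, hBcard⟩ : ∃ B : Finset (Fin r → ZMod 2), IsGoodSet r s ↑B ∧ B.card = Ggood r s :=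
    Nat.sInf_mem hSgne
  set v0 : Fin s → (Fin r → ZMod 2) := fun j => Pi.basisFun (ZMod 2) (Fin r) (Fin.castLE hsr j)
    with hv0def
  have hv0 : LinearIndependent (ZMod 2) v0 :=
    (Pi.basisFun (ZMod 2) (Fin r)).linearIndependent.comp _ (Fin.castLE_injective hsr)
  obtain ⟨b, hbB, -⟩ := hB v0 hv0 0
  have haddself : ∀ y : Fin r → ZMod 2, y + y = 0 := by
    intro y; funext i; exact CharTwo.add_self_eq_zero (y i)
  set C : Finset (Fin r → ZMod 2) := (B.image (· + b)).erase 0 with hC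
  have h0mem : (0 : Fin r → ZMod 2) ∈ B.image (· + b) :=
    Finset.mem_image.mpr ⟨b, hbB, haddself b⟩
  have hCcard : C.card = B.card - 1 := by
    rw [hC, Finset.card_erase_of_mem h0mem,
      Finset.card_image_of_injective _ (add_left_injective b)]
  have hCrs : IsRSSet r s ↑C := by
    intro v hv
    obtain ⟨c, hcB, hc⟩ := hB v hv (fun j => 1 + bform b (v j))
    have hne : c + b ≠ 0 := by
      intro h
      have hcb : c = b := by
        have := congrArg (· + b) h
        simpa [add_assoc, haddself b] using this
      have := hc ⟨0, hs⟩
      rw [hcb] at this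
      have h01 : ∀ a : ZMod 2, a ≠ 1 + a := by decide
      exact h01 _ this
    refine ⟨c + b, ?_, fun j => ?_⟩
    · rw [Finset.mem_coe, hC, Finset.mem_erase]
      exact ⟨hne, Finset.mem_image.mpr ⟨c, hcB, rfl⟩⟩
    · rw [bform_add_left, hc j]
      have h11 : ∀ a : ZMod 2, 1 + a + a = 1 := by decide
      exact h11 _
  have hG1le : G1 r s ≤ C.card := Nat.sInf_le ⟨C, hCrs, rfl⟩
  have hBpos : 1 ≤ B.card := Finset.card_pos.mpr ⟨b, hbB⟩
  omega
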